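/- Let A be a compact metrizable topological space, Y a Hausdorff topological space, and f : A → Y a continuous surjection. Then there exists a Borel set T ⊆ A such that the restriction of f to T is a bijection from T onto Y, i.e., for every y ∈ Y there is exactly one t ∈ T with f(t) = y. -/

import Mathlib

open Set

/-- The Federer–Morse/Dixmier transversal lemma: a continuous surjection `f` from a
compact metrizable space `A` onto a Hausdorff space `Y` admits a Borel cross-section:
a Borel set `T ⊆ A` on which `f` restricts to a bijection onto `Y`. -/
theorem stmt_12 {A Y : Type*} [TopologicalSpace A] [CompactSpace A]
    [TopologicalSpace.MetrizableSpace A] [MeasurableSpace A] [BorelSpace A]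
    [TopologicalSpace Y] [T2Space Y]
    (f : A → Y) (hf : Continuous f) (hsurj : Function.Surjective f) :
    ∃ T : Set A, MeasurableSet T ∧ ∀ y : Y, ∃! t : A, t ∈ T ∧ f t = y := by
  letI : MetricSpace A := TopologicalSpace.metrizableSpaceMetric A
  -- embed A into ℕ →ᵇ ℝ
  obtain ⟨g, hg⟩ := TopologicalSpace.exists_embedding_l_infty A
  set e : A → ℕ → ℝ := fun x n => g x n with he
  have hecont : ∀ n, Continuous fun x => e x n := fun n =>
    ((continuous_eval_const (F := BoundedContinuousFunction ℕ ℝ) (x := n)).comp hg.continuous)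
  have heinj : ∀ x x', (∀ n, e x n = e x' n) → x = x' := by
    intro x x' h
    exact hg.injective (BoundedContinuousFunction.ext h)
  -- the transversal
  set T : Set A := {x | ∀ n, ∀ x', f x' = f x → (∀ i < n, e x' i = e x i) → e x n ≤ e x' n}
    with hT
  refine ⟨T, ?_, ?_⟩
  · -- measurability
    have : T = ⋂ n, {x | ∀ x', f x' = f x → (∀ i < n, e x' i = e x i) → e x n ≤ e x' n} := by
      ext x; simp [hT]
    rw [this]
    refine MeasurableSet.iInter fun n => ?_
    -- complement is the projection of a σ-compact set
    set U : Set (A × A) := {p | e p.2 n < e p.1 n} with hU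
    set D : Set (A × A) := {p | f p.1 = f p.2 ∧ ∀ i < n, e p.2 i = e p.1 i} with hD
    have hUopen : IsOpen U :=
      isOpen_lt ((hecont n).comp continuous_snd) ((hecont n).comp continuous_fst)
    have hDclosed : IsClosed D := by
      have h1 : IsClosed {p : A × A | f p.1 = f p.2} :=
        isClosed_eq (hf.comp continuous_fst) (hf.comp continuous_snd)
      have h2 : IsClosed {p : A × A | ∀ i < n, e p.2 i = e p.1 i} := by
        have : {p : A × A | ∀ i < n, e p.2 i = e p.1 i} =
            ⋂ i ∈ Finset.range n, {p : A × A | e p.2 i = e p.1 i} := by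
          ext p; simp [Finset.mem_range]
        rw [this]
        exact isClosed_biInter fun i _ =>
          isClosed_eq ((hecont i).comp continuous_snd) ((hecont i).comp continuous_fst)
      exact h1.inter h2
    obtain ⟨F, hFclosed, hFsub, hFU, -⟩ := hUopen.exists_iUnion_isClosed
    have hkey : {x | ∀ x', f x' = f x → (∀ i < n, e x' i = e x i) → e x n ≤ e x' n} =
        (Prod.fst '' (D ∩ U))ᶜ := by
      ext x
      simp only [mem_compl_iff, mem_image, mem_setOf_eq, hD, hU, mem_inter_iff, Prod.exists]
      constructor
      · rintro h ⟨a, b, ⟨⟨hfab, hab⟩, hlt⟩, rfl⟩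
        exact absurd (h b hfab.symm hab) (not_le.2 hlt)
      · intro h x' hfx hei
        by_contra hlt
        exact h ⟨x, x', ⟨⟨hfx.symm, hei⟩, not_le.1 hlt⟩, rfl⟩
    rw [hkey]
    refine (MeasurableSet.compl ?_)
    have : Prod.fst '' (D ∩ U) = ⋃ k, Prod.fst '' (D ∩ F k) := by
      rw [← image_iUnion, ← inter_iUnion, hFU]
    rw [this]
    refine MeasurableSet.iUnion fun k => ?_
    have hcpt : IsCompact (D ∩ F k) :=
      (hDclosed.inter (hFclosed k)).isCompact
    exact ((hcpt.image continuous_fst).isClosed).measurableSet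
  · -- bijectivity on each fiber
    intro y
    -- the nested sequence of compact sets
    let K : ℕ → Set A := fun n => Nat.rec (f ⁻¹' {y})
      (fun n Kn => {x ∈ Kn | ∀ x' ∈ Kn, e x n ≤ e x' n}) n
    have hK0 : K 0 = f ⁻¹' {y} := rfl
    have hKsucc : ∀ n, K (n + 1) = {x ∈ K n | ∀ x' ∈ K n, e x n ≤ e x' n} := fun n => rfl
    have hKmono : ∀ n, K (n + 1) ⊆ K n := fun n x hx => hx.1
    have hKsub0 : ∀ n, K n ⊆ f ⁻¹' {y} := by
      intro n
      induction n with
      | zero => exact subset_rfl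
      | succ n ih => exact (hKmono n).trans ih
    have hKclosed : ∀ n, IsClosed (K n) := by
      intro n
      induction n with
      | zero => exact (isClosed_singleton).preimage hf
      | succ n ih =>
        rw [hKsucc n]
        have : {x ∈ K n | ∀ x' ∈ K n, e x n ≤ e x' n}
            = K n ∩ ⋂ x' ∈ K n, {x | e x n ≤ e x' n} := by
          ext x; simp [mem_iInter]
        rw [this]
        exact ih.inter (isClosed_biInter fun x' _ => isClosed_le (hecont n) continuous_const)
    have hKcpt : ∀ n, IsCompact (K n) := fun n => (hKclosed n).isCompact
    have hKne : ∀ n, (K n).Nonempty := by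
      intro n
      induction n with
      | zero => exact hsurj y
      | succ n ih =>
        obtain ⟨x, hxK, hxmin⟩ := (hKcpt n).exists_isMinOn ih (hecont n).continuousOn
        exact ⟨x, hxK, fun x' hx' => hxmin hx'⟩
    -- all elements of K n agree on coordinates < n
    have hagree : ∀ n, ∀ x ∈ K n, ∀ x' ∈ K n, ∀ i < n, e x i = e x' i := by
      intro n
      induction n with
      | zero => intro x _ x' _ i hi; omega
      | succ n ih =>
        intro x hx x' hx' i hi
        rcases Nat.lt_succ_iff_lt_or_eq.1 hi with h | rfl
        · exact ih x (hKmono n hx) x' (hKmono n hx') i h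
        · exact le_antisymm (hx.2 x' hx'.1) (hx'.2 x hx.1)
    -- membership in all K n implies membership in T
    have hinT : ∀ x, (∀ n, x ∈ K n) → x ∈ T := by
      intro x hx n x' hfx hei
      have hx'K : ∀ m ≤ n, x' ∈ K m := by
        intro m hm
        induction m with
        | zero =>
          rw [hK0, mem_preimage, mem_singleton_iff, hfx]
          exact hKsub0 0 (hx 0)
        | succ m ih =>
          have hx'm : x' ∈ K m := ih (Nat.le_of_succ_le hm)
          refine ⟨hx'm, fun z hz => ?_⟩
          have h1 : e x m ≤ e z m := (hx (m + 1)).2 z hz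
          have h2 : e x' m = e x m := hei m (Nat.lt_of_succ_le hm)
          rw [h2]; exact h1
      exact ((hx (n + 1)).2 x' (hx'K n le_rfl))
    -- membership in T and the fiber implies membership in all K n
    have hTin : ∀ x, x ∈ T → f x = y → ∀ n, x ∈ K n := by
      intro x hxT hfx n
      induction n with
      | zero => rw [hK0, mem_preimage, mem_singleton_iff]; exact hfx
      | succ n ih =>
        refine ⟨ih, fun x' hx' => ?_⟩
        have hfx' : f x' = f x := by
          have := hKsub0 n hx'
          rw [mem_preimage, mem_singleton_iff] at this
          rw [this, hfx]
        exact hxT n x' hfx' fun i hi => hagree n x' hx' x ih i hi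
    -- existence
    have hiInter : (⋂ n, K n).Nonempty := by
      apply IsCompact.nonempty_iInter_of_sequence_nonempty_isCompact_isClosed K hKmono hKne
        (hKcpt 0) hKclosed
    obtain ⟨x, hx⟩ := hiInter
    rw [mem_iInter] at hx
    have hxT : x ∈ T := hinT x hx
    have hxf : f x = y := by
      have := hKsub0 0 (hx 0)
      rwa [mem_preimage, mem_singleton_iff] at this
    refine ⟨x, ⟨hxT, hxf⟩, ?_⟩
    rintro t ⟨htT, htf⟩
    have htK : ∀ n, t ∈ K n := hTin t htT htf
    apply heinj
    intro n
    exact hagree (n + 1) t (htK (n + 1)) x (hx (n + 1)) n (Nat.lt_succ_self n)
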